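/- Let R be an integral domain, I a molecule of R such that R/I is zero-dimensional with only finitely many maximal ideals, and suppose the nilradical of R/I is nilpotent. Then I is a primary ideal of R; more precisely, M^m ⊆ I ⊆ M for some maximal ideal M of R containing I and some positive integer m. -/

import Mathlib

/-- If `I` is a molecule of a domain `R` such that `R/I` is zero-dimensional
with finitely many maximal ideals and nilpotent nilradical, then `I` is
primary; more precisely `Mᵐ ⊆ I ⊆ M` for some maximal ideal `M` and `m ≥ 1`. -/
theorem stmt_12 {R : Type*} [CommRing R] [IsDomain R] (I : Ideal R)
    (hne : I ≠ ⊥) (hproper : I ≠ ⊤)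
    (hmol : ∀ A B : Ideal R, I = A * B → A = ⊤ ∨ B = ⊤)
    (hzerodim : ∀ P : Ideal R, P.IsPrime → I ≤ P → P.IsMaximal)
    (hfin : {M : Ideal (R ⧸ I) | M.IsMaximal}.Finite)
    (hnilp : ∃ m : ℕ, 1 ≤ m ∧ I.radical ^ m ≤ I) :
    I.IsPrimary ∧
      ∃ (M : Ideal R) (m : ℕ), M.IsMaximal ∧ 1 ≤ m ∧ M ^ m ≤ I ∧ I ≤ M := by
  classical
  obtain ⟨m, hm1, hm⟩ := hnilp
  have hm0 : m ≠ 0 := Nat.one_le_iff_ne_zero.mp hm1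
  set T : Set (Ideal R) := {M | M.IsMaximal ∧ I ≤ M} with hTdef
  -- T is finite
  have hTfin : T.Finite := by
    refine (hfin.image (Ideal.comap (Ideal.Quotient.mk I))).subset ?_
    rintro M ⟨hMmax, hIM⟩
    rcases Ideal.map_eq_top_or_isMaximal_of_surjective (Ideal.Quotient.mk I)
      Ideal.Quotient.mk_surjective hMmax with h | h
    · exfalso
      have h2 := congrArg (Ideal.comap (Ideal.Quotient.mk I)) h
      rw [Ideal.comap_top, Ideal.comap_map_of_surjective _ Ideal.Quotient.mk_surjective,
        ← RingHom.ker_eq_comap_bot, Ideal.mk_ker, sup_eq_left.mpr hIM] at h2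
      exact hMmax.ne_top h2
    · refine ⟨_, h, ?_⟩
      rw [Ideal.comap_map_of_surjective _ Ideal.Quotient.mk_surjective,
        ← RingHom.ker_eq_comap_bot, Ideal.mk_ker, sup_eq_left.mpr hIM]
  -- radical I = sInf T
  have hrad : I.radical = sInf T := by
    apply le_antisymm
    · rw [Ideal.radical_eq_sInf]
      exact sInf_le_sInf (fun M hM => ⟨hM.2, hM.1.isPrime⟩)
    · rw [Ideal.radical_eq_sInf]
      exact le_sInf (fun J hJ => sInf_le ⟨hzerodim J hJ.2 hJ.1, hJ.1⟩)
  set s : Finset (Ideal R) := hTfin.toFinset with hsdef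
  have hmem : ∀ M : Ideal R, M ∈ s ↔ M ∈ T := fun M => hTfin.mem_toFinset
  -- product of powers over s lies in I
  have hprodrad : (∏ M ∈ s, M) ≤ I.radical := by
    rw [hrad]
    exact le_sInf fun M' hM' =>
      le_trans Ideal.prod_le_inf (Finset.inf_le ((hmem M').mpr hM'))
  have hprod : (∏ M ∈ s, M ^ m) ≤ I := by
    calc (∏ M ∈ s, M ^ m) = (∏ M ∈ s, M) ^ m := by rw [Finset.prod_pow]
    _ ≤ I.radical ^ m := Ideal.pow_right_mono hprodrad m
    _ ≤ I := hm
  -- there exists a maximal ideal containing I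
  obtain ⟨M₀, hM₀max, hIM₀⟩ := Ideal.exists_le_maximal I hproper
  have hM₀T : M₀ ∈ T := ⟨hM₀max, hIM₀⟩
  have hM₀s : M₀ ∈ s := (hmem M₀).mpr hM₀T
  -- T is a singleton
  have huniq : ∀ M₁ ∈ T, M₁ = M₀ := by
    intro M₁ hM₁T
    by_contra hne01
    have hM₁s' : M₁ ∈ s.erase M₀ := Finset.mem_erase.mpr ⟨hne01, (hmem M₁).mpr hM₁T⟩
    set P : Ideal R := ∏ M ∈ s.erase M₀, M ^ m with hPdef
    set A : Ideal R := I ⊔ M₀ ^ m with hA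
    set B : Ideal R := I ⊔ P with hB
    -- A and B are coprime
    have hcop : M₀ ^ m ⊔ P = ⊤ := by
      rw [← Ideal.isCoprime_iff_sup_eq]
      refine IsCoprime.prod_right (fun M hMs' => ?_)
      rw [Ideal.isCoprime_iff_sup_eq]
      have hMmax : M.IsMaximal := ((hmem M).mp (Finset.mem_of_mem_erase hMs')).1
      exact Ideal.pow_sup_pow_eq_top
        (hM₀max.coprime_of_ne hMmax (Finset.ne_of_mem_erase hMs').symm)
    have hABtop : A ⊔ B = ⊤ := by
      rw [eq_top_iff, ← hcop]
      exact sup_le_sup le_sup_right le_sup_right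
    -- I = A * B
    have hMP : M₀ ^ m * P ≤ I := by
      calc M₀ ^ m * P = ∏ M ∈ s, M ^ m := Finset.mul_prod_erase s (fun M => M ^ m) hM₀s
      _ ≤ I := hprod
    have hIAB : I = A * B := by
      apply le_antisymm
      · rw [Ideal.mul_eq_inf_of_coprime hABtop]
        exact le_inf le_sup_left le_sup_left
      · calc A * B = (I * I ⊔ M₀ ^ m * I) ⊔ (I * P ⊔ M₀ ^ m * P) := by
              rw [hB, Ideal.mul_sup, hA, Ideal.sup_mul, Ideal.sup_mul]
        _ ≤ I := sup_le (sup_le Ideal.mul_le_left Ideal.mul_le_right)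
              (sup_le Ideal.mul_le_left hMP)
    rcases hmol A B hIAB with h | h
    · have hAle : A ≤ M₀ := sup_le hIM₀ (Ideal.pow_le_self hm0)
      exact hM₀max.ne_top (top_le_iff.mp (h ▸ hAle))
    · have hPle : P ≤ M₁ :=
        le_trans Ideal.prod_le_inf (le_trans (Finset.inf_le hM₁s') (Ideal.pow_le_self hm0))
      have hBle : B ≤ M₁ := sup_le hM₁T.2 hPle
      exact hM₁T.1.ne_top (top_le_iff.mp (h ▸ hBle))
  -- hence radical I = M₀
  have hradM₀ : I.radical = M₀ := by
    rw [hrad]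
    exact le_antisymm (sInf_le hM₀T) (le_sInf (fun M hM => le_of_eq (huniq M hM).symm))
  have hM₀pow : M₀ ^ m ≤ I := by rw [← hradM₀]; exact hm
  exact ⟨Ideal.isPrimary_of_isMaximal_radical (hradM₀ ▸ hM₀max),
    M₀, m, hM₀max, hm1, hM₀pow, hIM₀⟩
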